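/- arXiv:quant-ph/9811074 — 3 statements merged into one kernel-verified Lean document; each statement's English description precedes it below -/
import Mathlib

section
/- Probability theorem: if A satisfies 0 ≤ A ≤ 1, ⟨φ₁,Aφ₁⟩ = 1 and ⟨φ₂,Aφ₂⟩ = 0 (A discriminates φ₁ against φ₂), then for the superposition φ = c₁φ₁ + c₂φ₂ with |c₁|² + |c₂|² = 1 one has ⟨φ, A φ⟩ = |c₁|². -/
open scoped InnerProductSpace

private lemma pos_inner_zero {H : Type*} [NormedAddCommGroup H] [InnerProductSpace ℂ H] [CompleteSpace H]
    (T : H →L[ℂ] H) (hT : T.IsPositive) (x : H) (hx : ⟪x, T x⟫_ℂ = 0) : T x = 0 := by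
  by_contra h
  have hsymm := hT.1
  set N : ℝ := ‖T x‖ ^ 2 with hN
  have hNpos : 0 < N := pow_pos (norm_pos_iff.mpr h) 2
  set C : ℝ := Complex.re ⟪T (T x), T x⟫_ℂ with hC
  have hCnn : 0 ≤ C := (Complex.nonneg_iff.mp (hT.inner_nonneg_left (T x))).1
  have key : ∀ t : ℝ, 0 ≤ 2 * t * N + t ^ 2 * C := by
    intro t
    have h0 := (Complex.nonneg_iff.mp (hT.inner_nonneg_left (x + (t : ℂ) • T x))).1
    have e1 : ⟪T (x + (t : ℂ) • T x), x + (t : ℂ) • T x⟫_ℂ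
        = ⟪T x, x⟫_ℂ + (t : ℂ) * ⟪T x, T x⟫_ℂ + (t : ℂ) * ⟪T (T x), x⟫_ℂ
          + (t : ℂ) * (t : ℂ) * ⟪T (T x), T x⟫_ℂ := by
      rw [map_add, map_smul]
      simp only [inner_add_left, inner_add_right, inner_smul_left, inner_smul_right,
        Complex.conj_ofReal]
      push_cast
      ring
    have hTxx : ⟪T x, x⟫_ℂ = 0 := by
      rw [← inner_conj_symm, hx, map_zero]
    have hTTx : ⟪T (T x), x⟫_ℂ = ⟪T x, T x⟫_ℂ := hsymm (T x) x
    have hnorm : ⟪T x, T x⟫_ℂ = (N : ℂ) := by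
      rw [inner_self_eq_norm_sq_to_K]; norm_num [hN]
    rw [e1, hTxx, hTTx, hnorm] at h0
    have h0' : 0 ≤ t * N + t * N + t * t * C := by
      simpa [Complex.add_re, Complex.mul_re, hC] using h0
    nlinarith [h0']
  have h1 : (0:ℝ) < C + 1 := by linarith
  have := key (-N / (C + 1))
  have h2 : 0 ≤ 2 * (-N / (C + 1)) * N + (-N / (C + 1)) ^ 2 * C := this
  rw [div_pow] at h2
  have h3 : 0 ≤ (2 * (-N / (C + 1)) * N + (-N) ^ 2 / (C + 1) ^ 2 * C) * (C + 1) ^ 2 := by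
    positivity
  have h4 : (2 * (-N / (C + 1)) * N + (-N) ^ 2 / (C + 1) ^ 2 * C) * (C + 1) ^ 2
      = -N ^ 2 * (C + 2) := by
    field_simp; ring
  nlinarith

theorem stmt4 {H : Type*} [NormedAddCommGroup H] [InnerProductSpace ℂ H] [CompleteSpace H]
    (φ₁ φ₂ : H) (hφ₁ : ‖φ₁‖ = 1) (hφ₂ : ‖φ₂‖ = 1) (horth : ⟪φ₁, φ₂⟫_ℂ = 0)
    (c₁ c₂ : ℂ) (hc : ‖c₁‖ ^ 2 + ‖c₂‖ ^ 2 = 1)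
    (A : H →L[ℂ] H) (hA : A.IsPositive) (hA1 : (1 - A).IsPositive)
    (h1 : ⟪φ₁, A φ₁⟫_ℂ = 1) (h2 : ⟪φ₂, A φ₂⟫_ℂ = 0) :
    ⟪c₁ • φ₁ + c₂ • φ₂, A (c₁ • φ₁ + c₂ • φ₂)⟫_ℂ = (‖c₁‖ ^ 2 : ℂ) := by
  have hAφ₂ : A φ₂ = 0 := pos_inner_zero A hA φ₂ h2
  have hφ₁self : ⟪φ₁, φ₁⟫_ℂ = 1 := by
    rw [inner_self_eq_norm_sq_to_K, hφ₁]; norm_num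
  have hAφ₁ : A φ₁ = φ₁ := by
    have : ⟪φ₁, (1 - A) φ₁⟫_ℂ = 0 := by
      simp [inner_sub_right, hφ₁self, h1, hφ₁]
    have h0 := pos_inner_zero (1 - A) hA1 φ₁ this
    have h1' : φ₁ - A φ₁ = 0 := by simpa using h0
    exact (sub_eq_zero.mp h1').symm
  have horth' : ⟪φ₂, φ₁⟫_ℂ = 0 := by rw [← inner_conj_symm, horth, map_zero]
  rw [map_add, map_smul, map_smul, hAφ₁, hAφ₂, smul_zero, add_zero]
  simp [inner_add_left, inner_smul_left, inner_smul_right, hφ₁self, horth']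
  simp only [hφ₁, Complex.ofReal_one, one_pow, one_mul]
  rw [Complex.mul_conj, Complex.normSq_eq_norm_sq]
  norm_cast
end

section
/- Coincidence statistics after a discriminating measurement match the mixture: under the state-reduction hypotheses (B discriminates ψ₁ against ψ₂), for any A on H₁, ⟨Φ, (A ⊗ B) Φ⟩ = |c₁|² ⟨φ₁, A φ₁⟩. -/
open scoped InnerProductSpace

lemma aux_pos_inner_zero {H : Type*} [NormedAddCommGroup H] [InnerProductSpace ℂ H]
    [CompleteSpace H] (B : H →L[ℂ] H) (hB : B.IsPositive) (x y : H)
    (hy : ⟪y, B y⟫_ℂ = 0) : ⟪x, B y⟫_ℂ = 0 := by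
  have hsym : ∀ u v : H, ⟪B u, v⟫_ℂ = ⟪u, B v⟫_ℂ := fun u v => hB.1 u v
  set z : ℂ := ⟪x, B y⟫_ℂ with hzdef
  have hyx : ⟪y, B x⟫_ℂ = starRingEnd ℂ z := by
    rw [← hsym y x, ← inner_conj_symm]
  set r : ℝ := (⟪x, B x⟫_ℂ).re with hrdef
  have hr : 0 ≤ r := by
    have := (Complex.le_def.mp (hB.inner_nonneg_right x)).1
    simpa using this
  have hBx : (⟪x, B x⟫_ℂ : ℂ) = (r : ℂ) := by
    have h1 : (starRingEnd ℂ) ⟪x, B x⟫_ℂ = ⟪x, B x⟫_ℂ := by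
      rw [inner_conj_symm, hsym]
    exact (Complex.conj_eq_iff_re.mp h1).symm
  set c : ℝ := 1 / (r + 1) with hcdef
  set t : ℂ := -(c : ℂ) * z with htdef
  have hzz : (starRingEnd ℂ) z * z = (Complex.normSq z : ℂ) :=
    (Complex.normSq_eq_conj_mul_self).symm
  have h0 : 0 ≤ RCLike.re ⟪y + t • x, B (y + t • x)⟫_ℂ :=
    by exact (Complex.le_def.mp (hB.inner_nonneg_right (y + t • x))).1
  have expand : ⟪y + t • x, B (y + t • x)⟫_ℂ
      = ((-(2 * c * Complex.normSq z) + c ^ 2 * Complex.normSq z * r : ℝ) : ℂ) := by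
    simp only [map_add, map_smul, inner_add_left, inner_add_right, inner_smul_left,
      inner_smul_right, hy, hyx, hBx, htdef, map_mul, map_neg, Complex.conj_ofReal]
    push_cast
    linear_combination ((c : ℂ) ^ 2 * (r : ℂ) - 2 * (c : ℂ)) * hzz
  rw [expand] at h0
  have h0' : 0 ≤ -(2 * c * Complex.normSq z) + c ^ 2 * Complex.normSq z * r := by
    simpa only [RCLike.re_to_complex, Complex.ofReal_re] using h0
  have hc0 : 0 < c := by positivity
  have hcr : c * r < 2 := by
    rw [hcdef]
    rw [div_mul_eq_mul_div, one_mul, div_lt_iff₀ (by linarith)]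
    linarith
  have hnz : Complex.normSq z = 0 := by
    have hnz0 : 0 ≤ Complex.normSq z := Complex.normSq_nonneg z
    by_contra hne
    have hpos : 0 < Complex.normSq z := lt_of_le_of_ne hnz0 (Ne.symm hne)
    nlinarith [mul_pos hc0 hpos, mul_lt_mul_of_pos_left hcr (mul_pos hc0 hpos)]
  have : z = 0 := Complex.normSq_eq_zero.mp hnz
  simpa [hzdef] using this

/-- Eq. (81) of the paper in the two-channel pure-state model: coincidence
statistics after a discriminating measurement match those of the mixture.
`TAB` represents `A ⊗ B` on the Hilbert tensor product `K`, characterized by its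
matrix elements on elementary tensors `tp x y`. -/
theorem stmt13 {H₁ H₂ K : Type*}
    [NormedAddCommGroup H₁] [InnerProductSpace ℂ H₁] [CompleteSpace H₁]
    [NormedAddCommGroup H₂] [InnerProductSpace ℂ H₂] [CompleteSpace H₂]
    [NormedAddCommGroup K] [InnerProductSpace ℂ K] [CompleteSpace K]
    (φ₁ φ₂ : H₁) (hφ₁ : ‖φ₁‖ = 1) (hφ₂ : ‖φ₂‖ = 1) (hφ : ⟪φ₁, φ₂⟫_ℂ = 0)
    (ψ₁ ψ₂ : H₂) (hψ₁ : ‖ψ₁‖ = 1) (hψ₂ : ‖ψ₂‖ = 1) (hψ : ⟪ψ₁, ψ₂⟫_ℂ = 0)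
    (c₁ c₂ : ℂ) (hc : ‖c₁‖ ^ 2 + ‖c₂‖ ^ 2 = 1)
    (B : H₂ →L[ℂ] H₂) (hB : B.IsPositive) (hB1 : (1 - B).IsPositive)
    (hBψ₁ : ⟪ψ₁, B ψ₁⟫_ℂ = 1) (hBψ₂ : ⟪ψ₂, B ψ₂⟫_ℂ = 0)
    (tp : H₁ → H₂ → K)
    (Φ : K) (hΦ : Φ = c₁ • tp φ₁ ψ₁ + c₂ • tp φ₂ ψ₂) :
    ∀ (A : H₁ →L[ℂ] H₁) (TAB : K →L[ℂ] K),
      (∀ (x x' : H₁) (y y' : H₂),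
        ⟪tp x y, TAB (tp x' y')⟫_ℂ = ⟪x, A x'⟫_ℂ * ⟪y, B y'⟫_ℂ) →
      ⟪Φ, TAB Φ⟫_ℂ = (‖c₁‖ ^ 2 : ℂ) * ⟪φ₁, A φ₁⟫_ℂ := by
  intro A TAB h
  have hsym : ∀ u v : H₂, ⟪B u, v⟫_ℂ = ⟪u, B v⟫_ℂ := fun u v => hB.1 u v
  have hz : ⟪ψ₁, B ψ₂⟫_ℂ = 0 := aux_pos_inner_zero B hB ψ₁ ψ₂ hBψ₂
  have hz' : ⟪ψ₂, B ψ₁⟫_ℂ = 0 := by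
    rw [← hsym ψ₂ ψ₁, ← inner_conj_symm, hz, map_zero]
  subst hΦ
  rw [map_add, map_smul, map_smul, inner_add_left, inner_add_right, inner_add_right,
    inner_smul_left, inner_smul_right, inner_smul_left, inner_smul_right,
    inner_smul_left, inner_smul_right, inner_smul_left, inner_smul_right,
    h, h, h, h, hBψ₁, hBψ₂, hz, hz']
  have hcn : (starRingEnd ℂ) c₁ * c₁ = ((‖c₁‖ ^ 2 : ℝ) : ℂ) := by
    rw [← Complex.normSq_eq_conj_mul_self, Complex.normSq_eq_norm_sq]
  push_cast at hcn
  linear_combination ⟪φ₁, A φ₁⟫_ℂ * hcn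
end

section
/- A general density operator X is a superposition of X₁ = P₁XP₁/|c₁|² and X₂ = P₂XP₂/|c₂|² in the sense of eq. (15): if P₁, P₂ are orthogonal projections with P₁ + P₂ = 1 and PᵢXPᵢ = |cᵢ|² Xᵢ with |c₁|²+|c₂|²=1, |cᵢ|² > 0, then for every observable 0 ≤ A ≤ 1 with Tr(A X₁) = 0 one has Tr(A X) = |c₂|² Tr(A X₂). -/
open ComplexOrder

open Matrix in
lemma trace_ctm_zero {n m : Type*} [Fintype n] [Fintype m]
    (M : Matrix m n ℂ) (h : (Mᴴ * M).trace = 0) : M = 0 := by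
  have key : ∑ j, ∑ i, ((Complex.normSq (M i j) : ℝ) : ℂ) = 0 := by
    simpa [Matrix.trace, Matrix.mul_apply, Matrix.conjTranspose_apply, Matrix.diag,
      Complex.normSq_eq_conj_mul_self] using h
  have key2 : ∑ j, ∑ i, Complex.normSq (M i j) = 0 := by
    exact_mod_cast (by push_cast at key ⊢; exact_mod_cast key :
      ((∑ j, ∑ i, Complex.normSq (M i j) : ℝ) : ℂ) = 0)
  ext i j
  have := (Finset.sum_eq_zero_iff_of_nonneg
    (fun j _ => Finset.sum_nonneg fun i _ => Complex.normSq_nonneg _)).mp key2 j (Finset.mem_univ _)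
  have := (Finset.sum_eq_zero_iff_of_nonneg
    (fun i _ => Complex.normSq_nonneg _)).mp this i (Finset.mem_univ _)
  simpa using Complex.normSq_eq_zero.mp this

/-- A general state `X` with `PᵢXPᵢ = |cᵢ|² Xᵢ` for complementary orthogonal
projections `P₁ + P₂ = 1` satisfies the probabilistic superposition condition
(eq. 15 of the paper): any observable vanishing on `X₁` sees only the `X₂`
component with weight `|c₂|²`. -/
theorem stmt18 {n : Type*} [Fintype n] [DecidableEq n]
    (X X₁ X₂ : Matrix n n ℂ) (hX : X.PosSemidef) (hX₁ : X₁.PosSemidef) (hX₂ : X₂.PosSemidef)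
    (hXtr : X.trace = 1) (hX₁tr : X₁.trace = 1) (hX₂tr : X₂.trace = 1)
    (P₁ P₂ : Matrix n n ℂ) (hP₁h : P₁.IsHermitian) (hP₂h : P₂.IsHermitian)
    (hP₁i : P₁ * P₁ = P₁) (hP₂i : P₂ * P₂ = P₂) (hPsum : P₁ + P₂ = 1)
    (c₁ c₂ : ℂ) (hc : ‖c₁‖ ^ 2 + ‖c₂‖ ^ 2 = 1)
    (hc₁ : 0 < ‖c₁‖ ^ 2) (hc₂ : 0 < ‖c₂‖ ^ 2)
    (h₁ : P₁ * X * P₁ = (‖c₁‖ ^ 2 : ℂ) • X₁) (h₂ : P₂ * X * P₂ = (‖c₂‖ ^ 2 : ℂ) • X₂)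
    (A : Matrix n n ℂ) (hA : A.PosSemidef) (hA1 : (1 - A).PosSemidef)
    (hAX₁ : (A * X₁).trace = 0) :
    (A * X).trace = (‖c₂‖ ^ 2 : ℂ) * (A * X₂).trace := by
  open Matrix in
  obtain ⟨S, hSh, hSS⟩ : ∃ S : Matrix n n ℂ, Sᴴ = S ∧ S * S = A :=
    by open scoped MatrixOrder in exact ⟨CFC.sqrt _, (CFC.sqrt_nonneg _).posSemidef.1, CFC.sqrt_mul_sqrt_self _ hA.nonneg⟩
  obtain ⟨T, hTh, hTT⟩ : ∃ T : Matrix n n ℂ, Tᴴ = T ∧ T * T = X₁ :=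
    by open scoped MatrixOrder in exact ⟨CFC.sqrt _, (CFC.sqrt_nonneg _).posSemidef.1, CFC.sqrt_mul_sqrt_self _ hX₁.nonneg⟩
  obtain ⟨R, hRh, hRR⟩ : ∃ R : Matrix n n ℂ, Rᴴ = R ∧ R * R = X :=
    by open scoped MatrixOrder in exact ⟨CFC.sqrt _, (CFC.sqrt_nonneg _).posSemidef.1, CFC.sqrt_mul_sqrt_self _ hX.nonneg⟩
  -- Step 1: S * T = 0, hence A * X₁ = 0
  have hST : S * T = 0 := by
    apply trace_ctm_zero
    have e : (S * T)ᴴ * (S * T) = (T * A) * T := by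
      rw [conjTranspose_mul, hSh, hTh, ← hSS]; noncomm_ring
    rw [e, Matrix.trace_mul_comm, show T * (T * A) = X₁ * A from by rw [← hTT]; noncomm_ring,
      Matrix.trace_mul_comm]
    exact hAX₁
  have hAX₁0 : A * X₁ = 0 := by
    calc A * X₁ = S * (S * T) * T := by rw [← hSS, ← hTT]; noncomm_ring
    _ = 0 := by rw [hST]; simp
  -- Step 2: A * (P₁ * X * P₁) = 0
  have hAP₁XP₁ : A * (P₁ * X * P₁) = 0 := by
    rw [h₁, Matrix.mul_smul, hAX₁0, smul_zero]
  -- Step 3: S * P₁ * R = 0, hence A * P₁ * X = 0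
  have hSPR : S * P₁ * R = 0 := by
    apply trace_ctm_zero
    have : (S * P₁ * R)ᴴ * (S * P₁ * R) = R * P₁ * (S * S) * P₁ * R := by
      simp only [conjTranspose_mul, hSh, hRh, hP₁h.eq]; noncomm_ring
    rw [this, hSS]
    calc (R * P₁ * A * P₁ * R).trace
        = ((R * R * P₁) * (A * P₁)).trace := by
          rw [show R * P₁ * A * P₁ * R = (R * P₁ * A * P₁) * R from by noncomm_ring,
            Matrix.trace_mul_comm]
          congr 1; noncomm_ring
    _ = (A * (P₁ * X * P₁)).trace := by
          rw [Matrix.trace_mul_comm, ← hRR]; congr 1; noncomm_ring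
    _ = 0 := by rw [hAP₁XP₁, Matrix.trace_zero]
  have hAPX : A * P₁ * X = 0 := by
    calc A * P₁ * X = S * (S * P₁ * R) * R := by rw [← hSS, ← hRR]; noncomm_ring
    _ = 0 := by rw [hSPR]; simp
  have hXPA : X * P₁ * A = 0 := by
    have := congrArg conjTranspose hAPX
    simpa [conjTranspose_mul, hA.1.eq, hX.1.eq, hP₁h.eq, mul_assoc] using this
  -- Step 5: expand
  have hexp : A * X = A * P₁ * X * P₁ + A * P₁ * X * P₂ + A * P₂ * X * P₁ + A * P₂ * X * P₂ := by
    have : A * X = A * (P₁ + P₂) * X * (P₁ + P₂) := by rw [hPsum]; simp [mul_assoc]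
    rw [this]; noncomm_ring
  rw [hexp]
  simp only [Matrix.trace_add, hAPX, Matrix.zero_mul, Matrix.trace_zero]
  have h3 : (A * P₂ * X * P₁).trace = 0 := by
    rw [show A * P₂ * X * P₁ = (A * P₂) * (X * P₁) from by noncomm_ring,
      Matrix.trace_mul_comm, show X * P₁ * (A * P₂) = (X * P₁ * A) * P₂ from by noncomm_ring,
      hXPA, Matrix.zero_mul, Matrix.trace_zero]
  have h4 : (A * P₂ * X * P₂).trace = (‖c₂‖ ^ 2 : ℂ) * (A * X₂).trace := by
    rw [show A * P₂ * X * P₂ = A * (P₂ * X * P₂) from by noncomm_ring, h₂,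
      Matrix.mul_smul, Matrix.trace_smul, smul_eq_mul]
  rw [h3, h4]; ring
end
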